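/- Let H be a digraph admitting a min-ordering a_1 < ... < a_p, let D be a digraph, and suppose lists L(x) ⊆ V(H) for x ∈ V(D) are arc-consistent (for every arc xy of D and every a ∈ L(x) there exists b ∈ L(y) with ab ∈ A(H), and for every b ∈ L(y) there exists a ∈ L(x) with ab ∈ A(H)) and all lists are nonempty. Then the map f sending each vertex x of D to the minimum element of L(x) in the min-ordering is a homomorphism from D to H. -/
import Mathlib

/-- If `H` admits a min-ordering, `D` is a digraph with nonempty
arc-consistent lists `L(x) ⊆ V(H)`, then mapping each vertex of `D` to the minimum
element of its list is a homomorphism from `D` to `H`. -/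
theorem stmt_2 {V U : Type*} [LinearOrder V] (A : V → V → Prop)
    (hmin : ∀ u u' v v', A u v → A u' v' → u < u' → v' < v → A u v')
    (AD : U → U → Prop) (L : U → Finset V) (hne : ∀ x, (L x).Nonempty)
    (hac1 : ∀ x y, AD x y → ∀ a ∈ L x, ∃ b ∈ L y, A a b)
    (hac2 : ∀ x y, AD x y → ∀ b ∈ L y, ∃ a ∈ L x, A a b) :
    ∀ x y, AD x y → A ((L x).min' (hne x)) ((L y).min' (hne y)) := by
  intro x y hxy
  set a := (L x).min' (hne x) with ha
  set b := (L y).min' (hne y) with hb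
  obtain ⟨b', hb', hab'⟩ := hac1 x y hxy a ((L x).min'_mem (hne x))
  obtain ⟨a', ha', ha'b⟩ := hac2 x y hxy b ((L y).min'_mem (hne y))
  rcases eq_or_lt_of_le ((L x).min'_le a' ha') with h1 | h1
  · rwa [← h1] at ha'b
  rcases eq_or_lt_of_le ((L y).min'_le b' hb') with h2 | h2
  · rwa [← h2] at hab'
  exact hmin a a' b' b hab' ha'b h1 h2
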